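/- Let Δ be a supersimple 2-(n,4,λ) design with point ∞, and suppose G = π_∞(Δ) is transitive on Ω∖{∞} but preserves a system of imprimitivity with ℓ ≥ 2 blocks. If there exists a line {a₁,a₂,b,∞} with a₁,a₂ in the same block and b in a different block, then n ≤ (ℓ/(ℓ-1))(6λ - 7 - 1/ℓ). -/

import Mathlib

variable {Ω : Type*} [Fintype Ω] [DecidableEq Ω]

/-- `(Ω, B)` is a supersimple 2-(n,4,λ) design: `Ω` has `n` points, every line has 4
points, every pair of distinct points lies on exactly `lam` lines, and any two
distinct lines meet in at most 2 points. -/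
def IsSupersimpleDesign (B : Finset (Finset Ω)) (n lam : ℕ) : Prop :=
  Fintype.card Ω = n ∧
  (∀ L ∈ B, L.card = 4) ∧
  (∀ a b : Ω, a ≠ b → (B.filter fun L => a ∈ L ∧ b ∈ L).card = lam) ∧
  (∀ L₁ ∈ B, ∀ L₂ ∈ B, L₁ ≠ L₂ → (L₁ ∩ L₂).card ≤ 2)

/-- Two points are collinear if some line contains both. -/
def Collin (B : Finset (Finset Ω)) (x y : Ω) : Prop := ∃ L ∈ B, x ∈ L ∧ y ∈ L

/-- `em` is the family of elementary moves `[x,y]` of the design `(Ω, B)`: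
for distinct collinear `x, y`, `em x y` swaps `x` and `y`, swaps the remaining two
points of each line through `x` and `y`, and fixes all other points; otherwise it
is the identity. -/
def IsElemMoves (B : Finset (Finset Ω)) (em : Ω → Ω → Equiv.Perm Ω) : Prop :=
  (∀ x y : Ω, x ≠ y → Collin B x y →
    em x y x = y ∧ em x y y = x ∧
    (∀ L ∈ B, x ∈ L → y ∈ L → ∀ a ∈ L, a ≠ x → a ≠ y →
      em x y a ∈ L ∧ em x y a ≠ a ∧ em x y a ≠ x ∧ em x y a ≠ y) ∧
    (∀ a : Ω, a ≠ x → a ≠ y → (∀ L ∈ B, x ∈ L → y ∈ L → a ∉ L) → em x y a = a)) ∧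
  (∀ x y : Ω, (x = y ∨ ¬ Collin B x y) → em x y = 1)

/-- The move sequence `[a₀, a₁, …, a_m] = [a₀,a₁][a₁,a₂]⋯[a_{m-1},a_m]`. -/
def moveSeq (em : Ω → Ω → Equiv.Perm Ω) : List Ω → Equiv.Perm Ω
  | x :: y :: l => em x y * moveSeq em (y :: l)
  | _ => 1

/-- The hole stabilizer `π_x(Δ)`: the group of all closed move sequences based at `x`. -/
def holeStab (em : Ω → Ω → Equiv.Perm Ω) (x : Ω) : Subgroup (Equiv.Perm Ω) :=
  Subgroup.closure {g | ∃ l : List Ω, g = moveSeq em (x :: (l ++ [x]))}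


/-! ### Auxiliary machinery -/

/-- Three points lie on a common line. -/
def T3 (B : Finset (Finset Ω)) (x y z : Ω) : Prop := ∃ M ∈ B, x ∈ M ∧ y ∈ M ∧ z ∈ M

lemma card4_distinct {x y z w : Ω} (h : ({x, y, z, w} : Finset Ω).card = 4) :
    x ≠ y ∧ x ≠ z ∧ x ≠ w ∧ y ≠ z ∧ y ≠ w ∧ z ≠ w := by
  have hle : ∀ a b c : Ω, ({a, b, c} : Finset Ω).card ≤ 3 := by
    intro a b c
    refine (Finset.card_insert_le _ _).trans (Nat.succ_le_succ ?_)
    refine (Finset.card_insert_le _ _).trans (Nat.succ_le_succ ?_)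
    simp
  refine ⟨?_, ?_, ?_, ?_, ?_, ?_⟩ <;> intro hEq <;> subst hEq
  · have h2 := le_trans (Finset.card_le_card
      (show ({x, x, z, w} : Finset Ω) ⊆ {x, z, w} by intro t ht; simp at ht ⊢; tauto))
      (hle x z w); omega
  · have h2 := le_trans (Finset.card_le_card
      (show ({x, y, x, w} : Finset Ω) ⊆ {x, y, w} by intro t ht; simp at ht ⊢; tauto))
      (hle x y w); omega
  · have h2 := le_trans (Finset.card_le_card
      (show ({x, y, z, x} : Finset Ω) ⊆ {x, y, z} by intro t ht; simp at ht ⊢; tauto))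
      (hle x y z); omega
  · have h2 := le_trans (Finset.card_le_card
      (show ({x, y, y, w} : Finset Ω) ⊆ {x, y, w} by intro t ht; simp at ht ⊢; tauto))
      (hle x y w); omega
  · have h2 := le_trans (Finset.card_le_card
      (show ({x, y, z, y} : Finset Ω) ⊆ {x, y, z} by intro t ht; simp at ht ⊢; tauto))
      (hle x y z); omega
  · have h2 := le_trans (Finset.card_le_card
      (show ({x, y, z, z} : Finset Ω) ⊆ {x, y, z} by intro t ht; simp at ht ⊢; tauto))
      (hle x y z); omega

lemma quad_eq {M : Finset Ω} (hM4 : M.card = 4) {x y u v : Ω}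
    (hx : x ∈ M) (hy : y ∈ M) (hu : u ∈ M) (hv : v ∈ M)
    (hxy : x ≠ y) (hxu : x ≠ u) (hxv : x ≠ v) (hyu : y ≠ u) (hyv : y ≠ v) (huv : u ≠ v) :
    M = {x, y, u, v} := by
  have hsub : ({x, y, u, v} : Finset Ω) ⊆ M := by
    simp [Finset.insert_subset_iff, hx, hy, hu, hv]
  have hcard : ({x, y, u, v} : Finset Ω).card = 4 := by
    rw [Finset.card_insert_of_notMem (by simp [hxy, hxu, hxv]),
        Finset.card_insert_of_notMem (by simp [hyu, hyv]),
        Finset.card_insert_of_notMem (by simp [huv]), Finset.card_singleton]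
  exact (Finset.eq_of_subset_of_card_le hsub (le_of_eq (hM4.trans hcard.symm))).symm

lemma em_fix {B : Finset (Finset Ω)} {em : Ω → Ω → Equiv.Perm Ω} (hem : IsElemMoves B em)
    {x y c : Ω} (hcx : c ≠ x) (hcy : c ≠ y)
    (h : ∀ M ∈ B, x ∈ M → y ∈ M → c ∉ M) : em x y c = c := by
  by_cases hxy : x = y
  · rw [hem.2 x y (Or.inl hxy)]; rfl
  by_cases hcol : Collin B x y
  · exact (hem.1 x y hxy hcol).2.2.2 c hcx hcy h
  · rw [hem.2 x y (Or.inr hcol)]; rfl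

lemma em_move {B : Finset (Finset Ω)} {em : Ω → Ω → Equiv.Perm Ω} (hem : IsElemMoves B em)
    {M : Finset Ω} (hM : M ∈ B) {x y u : Ω} (hx : x ∈ M) (hy : y ∈ M) (hxy : x ≠ y)
    (hu : u ∈ M) (hux : u ≠ x) (huy : u ≠ y) :
    em x y u ∈ M ∧ em x y u ≠ u ∧ em x y u ≠ x ∧ em x y u ≠ y :=
  (hem.1 x y hxy ⟨M, hM, hx, hy⟩).2.2.1 M hM hx hy u hu hux huy

lemma em_quad {B : Finset (Finset Ω)} {em : Ω → Ω → Equiv.Perm Ω} (hem : IsElemMoves B em)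
    {M : Finset Ω} (hM : M ∈ B) (hM4 : M.card = 4)
    {x y u v : Ω} (hx : x ∈ M) (hy : y ∈ M) (hu : u ∈ M) (hv : v ∈ M)
    (hxy : x ≠ y) (hxu : x ≠ u) (hxv : x ≠ v) (hyu : y ≠ u) (hyv : y ≠ v) (huv : u ≠ v) :
    em x y u = v := by
  obtain ⟨h1, h2, h3, h4⟩ := em_move hem hM hx hy hxy hu hxu.symm hyu.symm
  rw [quad_eq hM4 hx hy hu hv hxy hxu hxv hyu hyv huv] at h1
  simp only [Finset.mem_insert, Finset.mem_singleton] at h1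
  rcases h1 with h | h | h | h
  · exact absurd h h3
  · exact absurd h h4
  · exact absurd h h2
  · exact h

lemma design_count {n lam : ℕ} {B : Finset (Finset Ω)} (hD : IsSupersimpleDesign B n lam) :
    12 * B.card = (n * n - n) * lam := by
  classical
  obtain ⟨hn, h4, hpair, -⟩ := hD
  have e2 : ∀ M ∈ B, M.offDiag.card
      = ∑ p ∈ (Finset.univ : Finset Ω).offDiag, if p.1 ∈ M ∧ p.2 ∈ M then 1 else 0 := by
    intro M hM
    have hMe : M.offDiag = (Finset.univ : Finset Ω).offDiag.filter
        (fun p => p.1 ∈ M ∧ p.2 ∈ M) := by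
      ext ⟨x, y⟩
      simp only [Finset.mem_offDiag, Finset.mem_filter, Finset.mem_univ]
      tauto
    rw [hMe, Finset.card_filter]
  have main : ∑ M ∈ B, M.offDiag.card
      = ∑ p ∈ (Finset.univ : Finset Ω).offDiag,
          (B.filter (fun M => p.1 ∈ M ∧ p.2 ∈ M)).card := by
    rw [Finset.sum_congr rfl e2, Finset.sum_comm]
    exact Finset.sum_congr rfl fun p _ => (Finset.card_filter _ _).symm
  have lhs : ∑ M ∈ B, M.offDiag.card = B.card * 12 := by
    rw [Finset.sum_congr rfl (fun M hM => by
      rw [Finset.offDiag_card, h4 M hM]), Finset.sum_const, smul_eq_mul]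
  have rhs : ∑ p ∈ (Finset.univ : Finset Ω).offDiag,
      (B.filter (fun M => p.1 ∈ M ∧ p.2 ∈ M)).card = (n * n - n) * lam := by
    rw [Finset.sum_congr rfl (fun p hp => hpair p.1 p.2 (Finset.mem_offDiag.mp hp).2.2),
      Finset.sum_const, smul_eq_mul, Finset.offDiag_card, Finset.card_univ, hn]
  omega
/-- Lemma: suppose the hole stabilizer `G = π_∞(Δ)` of a supersimple 2-(n,4,λ) design
is transitive on `Ω \ {∞}` but preserves a system of imprimitivity with `ℓ ≥ 2`
blocks of equal size. If some line `{a₁, a₂, b, ∞}` has `a₁, a₂` in the same block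
and `b` in a different block, then `n ≤ (ℓ/(ℓ-1))(6λ - 7 - 1/ℓ)`. -/
theorem holeStab_imprimitive_line_bound {Ω : Type*} [Fintype Ω] [DecidableEq Ω]
    (B : Finset (Finset Ω)) (n lam : ℕ)
    (hD : IsSupersimpleDesign B n lam)
    (em : Ω → Ω → Equiv.Perm Ω) (hem : IsElemMoves B em)
    (inf : Ω)
    (htrans : ∀ x y : Ω, x ≠ inf → y ≠ inf → ∃ g ∈ holeStab em inf, g x = y)
    (ℓ k : ℕ) (hl : 2 ≤ ℓ)
    (blocks : Fin ℓ → Finset Ω)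
    (hdisj : ∀ i j : Fin ℓ, i ≠ j → Disjoint (blocks i) (blocks j))
    (hcover : Finset.univ.biUnion blocks = Finset.univ.erase inf)
    (hsize : ∀ i : Fin ℓ, (blocks i).card = k)
    (hinv : ∀ g ∈ holeStab em inf, ∀ i : Fin ℓ, ∃ j : Fin ℓ,
      (blocks i).image g = blocks j)
    (a₁ a₂ b : Ω) (ha : a₁ ≠ a₂)
    (hline : ({a₁, a₂, b, inf} : Finset Ω) ∈ B)
    (i j : Fin ℓ) (hij : i ≠ j)
    (ha₁ : a₁ ∈ blocks i) (ha₂ : a₂ ∈ blocks i) (hb : b ∈ blocks j) :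
    (n : ℚ) ≤ ((ℓ : ℚ) / (ℓ - 1)) * (6 * lam - 7 - 1 / ℓ) := by
  classical
  have hdc := design_count hD
  obtain ⟨hn, hcard4, hpair, hsimp⟩ := hD
  -- distinctness of the line points
  have hL4 : ({a₁, a₂, b, inf} : Finset Ω).card = 4 := hcard4 _ hline
  obtain ⟨-, h1b, h1i, h2b, h2i, hbi⟩ := card4_distinct hL4
  -- lam ≥ 1
  have hlam1 : 0 < lam := by
    have hmem : ({a₁, a₂, b, inf} : Finset Ω) ∈ B.filter (fun L => a₁ ∈ L ∧ a₂ ∈ L) :=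
      Finset.mem_filter.mpr ⟨hline, by simp, by simp⟩
    have := Finset.card_pos.mpr ⟨_, hmem⟩
    rwa [hpair a₁ a₂ ha] at this
  have hcollin : ∀ x y : Ω, x ≠ y → Collin B x y := by
    intro x y hxy
    have hpos : 0 < (B.filter fun L => x ∈ L ∧ y ∈ L).card := by
      rw [hpair x y hxy]; exact hlam1
    obtain ⟨M, hM⟩ := Finset.card_pos.mp hpos
    obtain ⟨hMB, hx, hy⟩ := Finset.mem_filter.mp hM
    exact ⟨M, hMB, hx, hy⟩
  -- elements of the hole stabilizer
  have gmem : ∀ p q : Ω, em inf p * (em p q * em q inf) ∈ holeStab em inf := by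
    intro p q
    exact Subgroup.subset_closure ⟨[p, q], by simp [moveSeq]⟩
  -- the block-preservation principle
  have blkS : ∀ g ∈ holeStab em inf, ∀ x y : Ω, ∀ m₁ m₂ : Fin ℓ,
      x ∈ blocks m₁ → y ∈ blocks m₁ → g x ∈ blocks m₂ → g y ∈ blocks m₂ := by
    intro g hg x y m₁ m₂ hx hy hgx
    obtain ⟨m, hm⟩ := hinv g hg m₁
    have hgx' : g x ∈ blocks m := by
      rw [← hm]; exact Finset.mem_image_of_mem g hx
    have hmeq : m = m₂ := by
      by_contra hne
      exact Finset.disjoint_left.mp (hdisj m m₂ hne) hgx' hgx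
    have hgy : g y ∈ blocks m := by
      rw [← hm]; exact Finset.mem_image_of_mem g hy
    rwa [hmeq] at hgy
  -- Move sequence [∞, a₁, c, ∞] sends a₂ ↦ b and a₁ ↦ c for "far" points c.
  have S1 : ∀ c : Ω, c ≠ inf → c ≠ a₁ → c ≠ a₂ →
      ¬ T3 B a₁ inf c → ¬ T3 B a₂ inf c → ¬ T3 B a₁ a₂ c → c ∈ blocks j := by
    intro c hci hc1 hc2 hT1 hT2 hT3
    have e1 : em c inf a₂ = a₂ :=
      em_fix hem hc2.symm (fun h => (h2i h).elim)
        (fun M hM hcM hiM h2M => hT2 ⟨M, hM, h2M, hiM, hcM⟩)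
    have e2 : em a₁ c a₂ = a₂ :=
      em_fix hem ha.symm hc2.symm
        (fun M hM h1M hcM h2M => hT3 ⟨M, hM, h1M, h2M, hcM⟩)
    have e3 : em inf a₁ a₂ = b :=
      em_quad hem hline hL4 (by simp) (by simp) (by simp) (by simp)
        (fun h => h1i h.symm) (fun h => h2i h.symm) (fun h => hbi h.symm)
        ha (fun h => h1b h) (fun h => h2b h)
    have e1' : em c inf a₁ = a₁ :=
      em_fix hem hc1.symm (fun h => (h1i h).elim)
        (fun M hM hcM hiM h1M => hT1 ⟨M, hM, h1M, hiM, hcM⟩)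
    have e2' : em a₁ c a₁ = c := (hem.1 a₁ c (fun h => hc1 h.symm) (hcollin a₁ c (fun h => hc1 h.symm))).1
    have e3' : em inf a₁ c = c :=
      em_fix hem hci hc1 (fun M hM hiM h1M hcM => hT1 ⟨M, hM, h1M, hiM, hcM⟩)
    have hga2 : (em inf a₁ * (em a₁ c * em c inf)) a₂ = b := by
      rw [Equiv.Perm.mul_apply, Equiv.Perm.mul_apply, e1, e2, e3]
    have hga1 : (em inf a₁ * (em a₁ c * em c inf)) a₁ = c := by
      rw [Equiv.Perm.mul_apply, Equiv.Perm.mul_apply, e1', e2', e3']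
    have hc' := blkS _ (gmem a₁ c) a₂ a₁ i j ha₂ ha₁ (by rw [hga2]; exact hb)
    rwa [hga1] at hc'
  -- The contradiction move: if c lies on a line through p and ∞ (with p, q in the
  -- same block and {p,q,b,∞} a line), but on no line through q,∞ nor through p,q,
  -- then [∞,p,c,∞] fixes p and sends q ↦ b, contradiction.
  have Wlem : ∀ p q : Ω, p ∈ blocks i → q ∈ blocks i →
      ({p, q, b, inf} : Finset Ω) ∈ B →
      ∀ c : Ω, c ∉ ({p, q, b, inf} : Finset Ω) → T3 B p inf c → ¬ T3 B q inf c →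
      (∀ M ∈ B, p ∈ M → c ∈ M → q ∉ M) → False := by
    intro p q hpB hqB hplineB c hcL hT1 hT2 hTq
    obtain ⟨hpq, hpb, hpi, hqb, hqi, hbi'⟩ := card4_distinct (hcard4 _ hplineB)
    have hcp : c ≠ p := fun h => hcL (by simp [h])
    have hcq : c ≠ q := fun h => hcL (by simp [h])
    have hci : c ≠ inf := fun h => hcL (by simp [h])
    obtain ⟨M, hMB, hpM, hiM, hcM⟩ := hT1
    have e1 : em c inf q = q :=
      em_fix hem hcq.symm hqi
        (fun M' hM' hcM' hiM' hqM' => hT2 ⟨M', hM', hqM', hiM', hcM'⟩)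
    have e2 : em p c q = q :=
      em_fix hem hpq.symm hcq.symm
        (fun M' hM' hpM' hcM' hqM' => hTq M' hM' hpM' hcM' hqM')
    have e3 : em inf p q = b :=
      em_quad hem hplineB (hcard4 _ hplineB) (by simp) (by simp) (by simp) (by simp)
        (fun h => hpi h.symm) (fun h => hqi h.symm) (fun h => hbi' h.symm)
        hpq hpb hqb
    have hgq : (em inf p * (em p c * em c inf)) q = b := by
      rw [Equiv.Perm.mul_apply, Equiv.Perm.mul_apply, e1, e2, e3]
    -- now compute the image of p
    have Hy := em_move hem hMB hcM hiM hci hpM hcp.symm hpi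
    have Hz := em_move hem hMB hpM hcM hcp.symm Hy.1 Hy.2.1 Hy.2.2.1
    have hMeq : M = {c, inf, p, em c inf p} :=
      quad_eq (hcard4 M hMB) hcM hiM hpM Hy.1 hci hcp Hy.2.2.1.symm
        (fun h => hpi h.symm) Hy.2.2.2.symm Hy.2.1.symm
    have hzinf : em p c (em c inf p) = inf := by
      have h1 := Hz.1
      rw [hMeq] at h1
      simp only [Finset.mem_insert, Finset.mem_singleton] at h1
      rcases h1 with h | h | h | h
      · exact absurd h Hz.2.2.2
      · exact h
      · exact absurd h Hz.2.2.1
      · exact absurd h Hz.2.1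
    have hgp : (em inf p * (em p c * em c inf)) p = p := by
      rw [Equiv.Perm.mul_apply, Equiv.Perm.mul_apply, hzinf]
      exact (hem.1 inf p (fun h => hpi h.symm)
        ⟨_, hplineB, by simp, by simp⟩).1
    have hbi2 := blkS _ (gmem p c) p q i i hpB hqB (by rw [hgp]; exact hpB)
    rw [hgq] at hbi2
    exact Finset.disjoint_left.mp (hdisj i j hij) hbi2 hb
  -- the exceptional sets
  set lineL : Finset Ω := {a₁, a₂, b, inf} with hlineL
  set Y₃ : Finset Ω :=
    ((B.filter fun M => a₁ ∈ M ∧ a₂ ∈ M).erase lineL).biUnion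
      (fun M => (M.erase a₁).erase a₂) with hY₃def
  set Y₁ : Finset Ω :=
    ((B.filter fun M => a₁ ∈ M ∧ inf ∈ M).erase lineL).biUnion
      (fun M => (M.erase a₁).erase inf) with hY₁def
  set Y₂ : Finset Ω :=
    ((B.filter fun M => a₂ ∈ M ∧ inf ∈ M).erase lineL).biUnion
      (fun M => (M.erase a₂).erase inf) with hY₂def
  have hcomm : ({a₂, a₁, b, inf} : Finset Ω) = lineL := Finset.insert_comm a₂ a₁ {b, inf}
  -- every point outside the block of b lies in the exceptional set
  have hFsub : Finset.univ.erase inf \ blocks j ⊆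
      insert a₁ (insert a₂ (Y₃ ∪ (Y₁ ∩ Y₂))) := by
    intro c hc
    obtain ⟨hc1, hc2⟩ := Finset.mem_sdiff.mp hc
    have hcinf : c ≠ inf := (Finset.mem_erase.mp hc1).1
    simp only [Finset.mem_insert, Finset.mem_union]
    by_cases hca1 : c = a₁
    · exact Or.inl hca1
    by_cases hca2 : c = a₂
    · exact Or.inr (Or.inl hca2)
    have hcb : c ≠ b := fun h => hc2 (h ▸ hb)
    have hcL : c ∉ lineL := by simp [hlineL, hca1, hca2, hcb, hcinf]
    by_cases hT3a : T3 B a₁ a₂ c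
    · obtain ⟨M, hMB, hm1, hm2, hcM⟩ := hT3a
      refine Or.inr (Or.inr (Or.inl (Finset.mem_biUnion.mpr ⟨M, ?_, ?_⟩)))
      · exact Finset.mem_erase.mpr ⟨fun h => hcL (h ▸ hcM),
          Finset.mem_filter.mpr ⟨hMB, hm1, hm2⟩⟩
      · exact Finset.mem_erase.mpr ⟨hca2, Finset.mem_erase.mpr ⟨hca1, hcM⟩⟩
    by_cases hT1 : T3 B a₁ inf c
    · by_cases hT2 : T3 B a₂ inf c
      · obtain ⟨M, hMB, hm1, hm2, hcM⟩ := hT1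
        obtain ⟨N, hNB, hn1', hn2', hcN⟩ := hT2
        refine Or.inr (Or.inr (Or.inr (Finset.mem_inter.mpr ⟨?_, ?_⟩)))
        · exact Finset.mem_biUnion.mpr ⟨M, Finset.mem_erase.mpr ⟨fun h => hcL (h ▸ hcM),
            Finset.mem_filter.mpr ⟨hMB, hm1, hm2⟩⟩,
            Finset.mem_erase.mpr ⟨hcinf, Finset.mem_erase.mpr ⟨hca1, hcM⟩⟩⟩
        · exact Finset.mem_biUnion.mpr ⟨N, Finset.mem_erase.mpr ⟨fun h => hcL (h ▸ hcN),
            Finset.mem_filter.mpr ⟨hNB, hn1', hn2'⟩⟩,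
            Finset.mem_erase.mpr ⟨hcinf, Finset.mem_erase.mpr ⟨hca2, hcN⟩⟩⟩
      · exact (Wlem a₁ a₂ ha₁ ha₂ hline c hcL hT1 hT2
          (fun M hM hm1 hcM hm2 => hT3a ⟨M, hM, hm1, hm2, hcM⟩)).elim
    · by_cases hT2 : T3 B a₂ inf c
      · exact (Wlem a₂ a₁ ha₂ ha₁ (by rw [hcomm]; exact hline) c
          (by rw [hcomm]; exact hcL) hT2 hT1
          (fun M hM hm2 hcM hm1 => hT3a ⟨M, hM, hm1, hm2, hcM⟩)).elim
      · exact absurd (S1 c hcinf hca1 hca2 hT1 hT2 hT3a) hc2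
  -- cardinality bounds for the exceptional sets
  have hYcard : ∀ (x y : Ω), x ≠ y → x ∈ lineL → y ∈ lineL →
      ∀ s : Finset (Finset Ω), s = (B.filter fun M => x ∈ M ∧ y ∈ M).erase lineL →
      (s.biUnion (fun M => (M.erase x).erase y)).card ≤ (lam - 1) * 2 := by
    intro x y hxy hxL hyL s hs
    refine Finset.card_biUnion_le.trans ?_
    have hstep : ∀ M ∈ s, ((M.erase x).erase y).card ≤ 2 := by
      intro M hM
      rw [hs] at hM
      obtain ⟨hMne, hMf⟩ := Finset.mem_erase.mp hM
      obtain ⟨hMB, hMx, hMy⟩ := Finset.mem_filter.mp hMf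
      rw [Finset.card_erase_of_mem (Finset.mem_erase.mpr ⟨hxy.symm, hMy⟩),
        Finset.card_erase_of_mem hMx, hcard4 M hMB]
    refine (Finset.sum_le_sum hstep).trans ?_
    rw [Finset.sum_const, smul_eq_mul, hs,
      Finset.card_erase_of_mem (Finset.mem_filter.mpr ⟨hline, hxL, hyL⟩),
      hpair x y hxy]
  have hY3 : Y₃.card ≤ (lam - 1) * 2 :=
    hYcard a₁ a₂ ha (by simp [hlineL]) (by simp [hlineL]) _ rfl
  have hY1 : Y₁.card ≤ (lam - 1) * 2 :=
    hYcard a₁ inf h1i (by simp [hlineL]) (by simp [hlineL]) _ rfl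
  have hY12 : (Y₁ ∩ Y₂).card ≤ (lam - 1) * 2 :=
    le_trans (Finset.card_le_card Finset.inter_subset_left) hY1
  -- when lam = 2, the set Y₁ ∩ Y₂ has at most one point
  have hY12two : lam = 2 → (Y₁ ∩ Y₂).card ≤ 1 := by
    intro hlam2
    by_contra hgt
    push_neg at hgt
    obtain ⟨c, hc, c', hc', hcc'⟩ := Finset.one_lt_card.mp hgt
    obtain ⟨hcY1, hcY2⟩ := Finset.mem_inter.mp hc
    obtain ⟨hc'Y1, hc'Y2⟩ := Finset.mem_inter.mp hc'
    obtain ⟨M, hMmem, hcM⟩ := Finset.mem_biUnion.mp hcY1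
    obtain ⟨M', hM'mem, hc'M'⟩ := Finset.mem_biUnion.mp hc'Y1
    obtain ⟨N, hNmem, hcN⟩ := Finset.mem_biUnion.mp hcY2
    obtain ⟨N', hN'mem, hc'N'⟩ := Finset.mem_biUnion.mp hc'Y2
    have hcard1 : ((B.filter fun M => a₁ ∈ M ∧ inf ∈ M).erase lineL).card ≤ 1 := by
      rw [Finset.card_erase_of_mem (Finset.mem_filter.mpr ⟨hline, by simp [hlineL], by simp [hlineL]⟩),
        hpair a₁ inf h1i, hlam2]
    have hcard2 : ((B.filter fun M => a₂ ∈ M ∧ inf ∈ M).erase lineL).card ≤ 1 := by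
      rw [Finset.card_erase_of_mem (Finset.mem_filter.mpr ⟨hline, by simp [hlineL], by simp [hlineL]⟩),
        hpair a₂ inf h2i, hlam2]
    have hMM' : M = M' := Finset.card_le_one.mp hcard1 _ hMmem _ hM'mem
    have hNN' : N = N' := Finset.card_le_one.mp hcard2 _ hNmem _ hN'mem
    obtain ⟨hMne, hMf⟩ := Finset.mem_erase.mp hMmem
    obtain ⟨hMB, hM1, hMi⟩ := Finset.mem_filter.mp hMf
    obtain ⟨hNne, hNf⟩ := Finset.mem_erase.mp hNmem
    obtain ⟨hNB, hN2, hNi⟩ := Finset.mem_filter.mp hNf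
    have hMN : M ≠ N := by
      intro h
      have hsub3 : ({a₁, a₂, inf} : Finset Ω) ⊆ M ∩ lineL := by
        intro t ht
        simp only [Finset.mem_insert, Finset.mem_singleton] at ht
        rcases ht with rfl | rfl | rfl
        · exact Finset.mem_inter.mpr ⟨hM1, by simp [hlineL]⟩
        · exact Finset.mem_inter.mpr ⟨h ▸ hN2, by simp [hlineL]⟩
        · exact Finset.mem_inter.mpr ⟨hMi, by simp [hlineL]⟩
      have h3 : ({a₁, a₂, inf} : Finset Ω).card = 3 := by
        rw [Finset.card_insert_of_notMem (by simp [ha, h1i]),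
          Finset.card_insert_of_notMem (by simp [h2i]), Finset.card_singleton]
      have := (Finset.card_le_card hsub3).trans (hsimp M hMB lineL hline hMne)
      omega
    have hcMm : c ∈ M := Finset.mem_of_mem_erase (Finset.mem_of_mem_erase hcM)
    have hcNm : c ∈ N := Finset.mem_of_mem_erase (Finset.mem_of_mem_erase hcN)
    have hc'Mm : c' ∈ M := hMM' ▸ Finset.mem_of_mem_erase (Finset.mem_of_mem_erase hc'M')
    have hc'Nm : c' ∈ N := hNN' ▸ Finset.mem_of_mem_erase (Finset.mem_of_mem_erase hc'N')
    have hcinf : c ≠ inf := (Finset.mem_erase.mp hcM).1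
    have hc'inf : c' ≠ inf := (Finset.mem_erase.mp hc'M').1
    have hsub3 : ({inf, c, c'} : Finset Ω) ⊆ M ∩ N := by
      intro t ht
      simp only [Finset.mem_insert, Finset.mem_singleton] at ht
      rcases ht with rfl | rfl | rfl
      · exact Finset.mem_inter.mpr ⟨hMi, hNi⟩
      · exact Finset.mem_inter.mpr ⟨hcMm, hcNm⟩
      · exact Finset.mem_inter.mpr ⟨hc'Mm, hc'Nm⟩
    have h3 : ({inf, c, c'} : Finset Ω).card = 3 := by
      rw [Finset.card_insert_of_notMem (by simp [hcinf.symm, hc'inf.symm]), Finset.card_insert_of_notMem (by simp [hcc']), Finset.card_singleton]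
    have := (Finset.card_le_card hsub3).trans (hsimp M hMB N hNB hMN)
    omega
  -- counting
  have hn1 : 0 < n := by rw [← hn]; exact Fintype.card_pos_iff.mpr ⟨inf⟩
  have hErase : (Finset.univ.erase inf).card = n - 1 := by
    rw [Finset.card_erase_of_mem (Finset.mem_univ inf), Finset.card_univ, hn]
  have hnk : ℓ * k = n - 1 := by
    have h2 : (Finset.univ.biUnion blocks).card = (Finset.univ.erase inf).card := by
      rw [hcover]
    rw [Finset.card_biUnion (fun x _ y _ hxy => hdisj x y hxy),
      Finset.sum_congr rfl (fun x _ => hsize x), Finset.sum_const, smul_eq_mul,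
      Finset.card_univ, Fintype.card_fin, hErase] at h2
    exact h2
  have hBj : blocks j ⊆ Finset.univ.erase inf := by
    intro x hx
    rw [← hcover]
    exact Finset.mem_biUnion.mpr ⟨j, Finset.mem_univ j, hx⟩
  have hFcard : (Finset.univ.erase inf \ blocks j).card = (n - 1) - k := by
    rw [Finset.card_sdiff_of_subset hBj, hErase, hsize j]
  have hk2 : 2 ≤ k := by
    rw [← hsize i]
    exact Finset.one_lt_card.mpr ⟨a₁, ha₁, a₂, ha₂, ha⟩
  have hKB : ℓ * k - k ≤ Y₃.card + (Y₁ ∩ Y₂).card + 2 := by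
    rw [hnk, ← hFcard]
    refine le_trans (Finset.card_le_card hFsub) ?_
    refine le_trans (Finset.card_insert_le _ _) ?_
    refine le_trans (Nat.succ_le_succ (Finset.card_insert_le _ _)) ?_
    have := Finset.card_union_le Y₃ (Y₁ ∩ Y₂)
    omega
  -- abstract the product
  obtain ⟨K, hK⟩ : ∃ K, ℓ * k - k = K := ⟨_, rfl⟩
  have hKfact : (ℓ - 1) * k = K := by rw [tsub_mul, one_mul, hK]
  rw [hK] at hKB
  -- the key numerical bound
  have key : K + 8 ≤ 6 * lam := by
    rcases Nat.lt_or_ge lam 3 with hl3 | hl3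
    · interval_cases lam
      · -- lam = 1 : exceptional sets are empty, K = 2, n = 5; impossible by counting
        exfalso
        have hY3' : Y₃.card = 0 := by omega
        have hY12' : (Y₁ ∩ Y₂).card = 0 := by omega
        have hK2 : K ≤ 2 := by omega
        have hK2' : 2 ≤ K := by
          rw [← hKfact]
          calc 2 = 1 * 2 := by norm_num
          _ ≤ (ℓ - 1) * k := Nat.mul_le_mul (by omega) hk2
        have hKeq : (ℓ - 1) * k = 2 := by omega
        have hLm : ℓ - 1 = 1 := by
          by_contra h
          have h2' : 2 ≤ ℓ - 1 := by omega
          have := Nat.mul_le_mul h2' hk2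
          omega
        have hkeq : k = 2 := by rw [hLm, one_mul] at hKeq; exact hKeq
        have hleq : ℓ = 2 := by omega
        have hneq : n = 5 := by
          rw [hleq, hkeq] at hnk
          omega
        rw [hneq] at hdc
        omega
      · -- lam = 2
        rcases Nat.lt_or_ge K 5 with h4 | h5'
        · omega
        · exfalso
          have hY12' := hY12two rfl
          have hK5 : K = 5 := by omega
          have h5 : (ℓ - 1) * k = 5 := by rw [hKfact, hK5]
          have hkd : k ∣ 5 := ⟨ℓ - 1, by rw [← h5]; ring⟩
          have hk5 : k ≤ 5 := Nat.le_of_dvd (by norm_num) hkd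
          interval_cases k
          · exact absurd hkd (by norm_num)
          · exact absurd hkd (by norm_num)
          · exact absurd hkd (by norm_num)
          · -- k = 5
            have hLm : ℓ - 1 = 1 := by
              have : (ℓ - 1) * 5 = 1 * 5 := by rw [h5]
              exact Nat.eq_of_mul_eq_mul_right (by norm_num) this
            have hleq : ℓ = 2 := by omega
            have hneq : n = 11 := by
              rw [hleq] at hnk
              norm_num at hnk
              omega
            rw [hneq] at hdc
            omega
    · -- lam ≥ 3
      omega
  -- translate to the rational inequality
  have hn' : n = ℓ * k + 1 := by omega
  have hl2 : (2 : ℚ) ≤ (ℓ : ℚ) := by exact_mod_cast hl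
  have hlpos : (0 : ℚ) < (ℓ : ℚ) := by linarith
  have hl1pos : (0 : ℚ) < (ℓ : ℚ) - 1 := by linarith
  rw [div_mul_eq_mul_div, le_div_iff₀ hl1pos]
  have hR : (ℓ : ℚ) * (6 * (lam : ℚ) - 7 - 1 / (ℓ : ℚ)) = 6 * lam * ℓ - 7 * ℓ - 1 := by
    field_simp
  rw [hR]
  have hkle : k ≤ ℓ * k := by
    calc k = 1 * k := (one_mul k).symm
    _ ≤ ℓ * k := Nat.mul_le_mul_right k (by omega)
  have hkQ : (ℓ : ℚ) * k - k + 8 ≤ 6 * (lam : ℚ) := by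
    have h1 : ((ℓ * k - k : ℕ) : ℚ) + 8 ≤ 6 * (lam : ℚ) := by
      rw [hK]; exact_mod_cast key
    rw [Nat.cast_sub hkle] at h1
    push_cast at h1
    linarith
  have hnQ : (n : ℚ) = (ℓ : ℚ) * k + 1 := by
    rw [hn']
    push_cast
    ring
  nlinarith [mul_le_mul_of_nonneg_left hkQ hlpos.le, hnQ, hl2, hlpos]
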